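/- Let f be a non-negative multiplicative arithmetic function such that (1) there is a constant A₁ > 0 with f(p^r) ≤ A₁^r for all primes p and all integers r ≥ 1, and (2) for every ε > 0 there is a constant A₂(ε) > 0 with f(n) ≤ A₂(ε) n^ε for all n ≥ 1. Then ∑_{n ≤ x} f(n) ≪ (x/log x) · exp(∑_{p ≤ x} f(p)/p) for x ≥ 2, where the inner sum is over primes p ≤ x, and the implied constant depends only on A₁ and the function A₂. -/

import Mathlib

open Finset

private lemma shiu_log_le {t : ℝ} (ht : 1 ≤ t) {ε : ℝ} (hε : 0 < ε) :
    Real.log t ≤ t ^ ε / ε := by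
  have h0 : (0:ℝ) < t := lt_of_lt_of_le one_pos ht
  have h1 : Real.log (t ^ ε) = ε * Real.log t := Real.log_rpow h0 ε
  have h2 : Real.log (t ^ ε) ≤ t ^ ε := Real.log_le_self (Real.rpow_nonneg h0.le ε)
  rw [h1] at h2
  rw [le_div_iff₀ hε]
  linarith

private lemma shiu_theta (M : ℕ) :
    ∑ p ∈ (Finset.range (M + 1)).filter Nat.Prime, Real.log (p:ℝ) ≤ M * Real.log 4 := by
  have hcast : ((primorial M : ℕ) : ℝ) = ∏ p ∈ (Finset.range (M + 1)).filter Nat.Prime, (p : ℝ) := by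
    unfold primorial; push_cast; rfl
  have h1 : ∑ p ∈ (Finset.range (M + 1)).filter Nat.Prime, Real.log (p:ℝ)
      = Real.log ((primorial M : ℕ) : ℝ) := by
    rw [hcast, Real.log_prod]
    intro p hp
    exact_mod_cast (Finset.mem_filter.mp hp).2.pos.ne'
  rw [h1]
  have h2 : ((primorial M : ℕ) : ℝ) ≤ (4 : ℝ) ^ M := by exact_mod_cast primorial_le_4_pow M
  calc Real.log ((primorial M : ℕ) : ℝ) ≤ Real.log ((4:ℝ) ^ M) :=
        Real.log_le_log (by exact_mod_cast primorial_pos M) h2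
    _ = M * Real.log 4 := by rw [Real.log_pow]

set_option maxHeartbeats 1000000 in
private lemma shiuV_le (A₁ : ℝ) (hA₁ : 0 < A₁) (B : ℝ) (hB : 0 < B)
    (f : ℕ → ℝ) (hf0 : ∀ n : ℕ, 0 < n → 0 ≤ f n)
    (hfA1 : ∀ p r : ℕ, p.Prime → 1 ≤ r → f (p ^ r) ≤ A₁ ^ r)
    (hfA2 : ∀ n : ℕ, 0 < n → f n ≤ B * (n : ℝ) ^ ((1:ℝ)/8))
    (M : ℕ) :
    ∑ q ∈ ((Finset.Icc 2 M ×ˢ Finset.Icc 1 M).filter fun q : ℕ × ℕ => q.1.Prime ∧ q.1 ^ q.2 ≤ M),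
        f (q.1 ^ q.2) * Real.log ((q.1 ^ q.2 : ℕ) : ℝ)
      ≤ (A₁ * Real.log 4 + 96 * B) * M := by
  classical
  rcases Nat.eq_zero_or_pos M with rfl | hM
  · have hempty : Finset.Icc 2 0 = (∅ : Finset ℕ) := Finset.Icc_eq_empty (by omega)
    simp [hempty]
  have hM0 : (0:ℝ) < (M:ℝ) := by exact_mod_cast hM
  have hM1 : (1:ℝ) ≤ (M:ℝ) := by exact_mod_cast hM
  set s : Finset (ℕ × ℕ) := (Finset.Icc 2 M ×ˢ Finset.Icc 1 M).filter
      (fun q : ℕ × ℕ => q.1.Prime ∧ q.1 ^ q.2 ≤ M) with hs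
  have hsplit := Finset.sum_filter_add_sum_filter_not s (fun q : ℕ × ℕ => q.2 = 1)
      (fun q : ℕ × ℕ => f (q.1 ^ q.2) * Real.log ((q.1 ^ q.2 : ℕ) : ℝ))
  rw [← hsplit]
  have h1 : ∑ q ∈ s.filter (fun q : ℕ × ℕ => q.2 = 1),
      f (q.1 ^ q.2) * Real.log ((q.1 ^ q.2 : ℕ) : ℝ) ≤ A₁ * ((M:ℝ) * Real.log 4) := by
    have hle : ∀ q ∈ s.filter (fun q : ℕ × ℕ => q.2 = 1),
        f (q.1 ^ q.2) * Real.log ((q.1 ^ q.2 : ℕ) : ℝ) ≤ A₁ * Real.log (q.1 : ℝ) := by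
      intro q hq
      obtain ⟨hqs, hq2⟩ := Finset.mem_filter.mp hq
      rw [hs] at hqs
      obtain ⟨hqm, hqp, hqle⟩ := Finset.mem_filter.mp hqs
      obtain ⟨hq1m, _⟩ := Finset.mem_product.mp hqm
      obtain ⟨hq1two, _⟩ := Finset.mem_Icc.mp hq1m
      have hlognn : 0 ≤ Real.log (q.1 : ℝ) := Real.log_nonneg (by exact_mod_cast Nat.one_le_of_lt hq1two)
      have hfle : f (q.1 ^ q.2) ≤ A₁ := by
        have := hfA1 q.1 1 hqp le_rfl
        rw [pow_one, pow_one] at this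
        rw [hq2, pow_one]
        exact this
      calc f (q.1 ^ q.2) * Real.log ((q.1 ^ q.2 : ℕ) : ℝ)
          = f (q.1 ^ q.2) * Real.log (q.1 : ℝ) := by rw [hq2, pow_one]
        _ ≤ A₁ * Real.log (q.1 : ℝ) := by
            apply mul_le_mul_of_nonneg_right _ hlognn
            rw [hq2] at hfle ⊢
            exact hfle
    have hinj : ∀ q ∈ s.filter (fun q : ℕ × ℕ => q.2 = 1),
        ∀ q' ∈ s.filter (fun q : ℕ × ℕ => q.2 = 1), q.1 = q'.1 → q = q' := by
      intro q hq q' hq' hqq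
      have h2 : q.2 = 1 := (Finset.mem_filter.mp hq).2
      have h2' : q'.2 = 1 := (Finset.mem_filter.mp hq').2
      exact Prod.ext hqq (by rw [h2, h2'])
    calc ∑ q ∈ s.filter (fun q : ℕ × ℕ => q.2 = 1),
          f (q.1 ^ q.2) * Real.log ((q.1 ^ q.2 : ℕ) : ℝ)
        ≤ ∑ q ∈ s.filter (fun q : ℕ × ℕ => q.2 = 1), A₁ * Real.log (q.1 : ℝ) :=
          Finset.sum_le_sum hle
      _ = ∑ p ∈ (s.filter (fun q : ℕ × ℕ => q.2 = 1)).image Prod.fst, A₁ * Real.log (p : ℝ) :=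
          by rw [Finset.sum_image hinj]
      _ ≤ ∑ p ∈ (Finset.range (M + 1)).filter Nat.Prime, A₁ * Real.log (p : ℝ) := by
          apply Finset.sum_le_sum_of_subset_of_nonneg
          · intro p hp
            obtain ⟨q, hq, rfl⟩ := Finset.mem_image.mp hp
            obtain ⟨hqs, _⟩ := Finset.mem_filter.mp hq
            rw [hs] at hqs
            obtain ⟨hqm, hqp, _⟩ := Finset.mem_filter.mp hqs
            obtain ⟨hq1m, _⟩ := Finset.mem_product.mp hqm
            obtain ⟨_, hq1M⟩ := Finset.mem_Icc.mp hq1m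
            exact Finset.mem_filter.mpr ⟨Finset.mem_range.mpr (by omega), hqp⟩
          · intro p hp _
            have hpp := (Finset.mem_filter.mp hp).2
            exact mul_nonneg hA₁.le (Real.log_nonneg (by exact_mod_cast hpp.one_lt.le))
      _ = A₁ * ∑ p ∈ (Finset.range (M + 1)).filter Nat.Prime, Real.log (p : ℝ) := by
          rw [Finset.mul_sum]
      _ ≤ A₁ * ((M:ℝ) * Real.log 4) := mul_le_mul_of_nonneg_left (shiu_theta M) hA₁.le
  have h2 : ∑ q ∈ s.filter (fun q : ℕ × ℕ => ¬ q.2 = 1),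
      f (q.1 ^ q.2) * Real.log ((q.1 ^ q.2 : ℕ) : ℝ) ≤ 96 * B * (M:ℝ) := by
    have hb : ∀ q ∈ s.filter (fun q : ℕ × ℕ => ¬ q.2 = 1),
        f (q.1 ^ q.2) * Real.log ((q.1 ^ q.2 : ℕ) : ℝ) ≤ 8 * B * (M:ℝ) ^ ((1:ℝ)/4) := by
      intro q hq
      obtain ⟨hqs, _⟩ := Finset.mem_filter.mp hq
      rw [hs] at hqs
      obtain ⟨hqm, hqp, hqle⟩ := Finset.mem_filter.mp hqs
      obtain ⟨hq1m, hq2m⟩ := Finset.mem_product.mp hqm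
      obtain ⟨hq1two, _⟩ := Finset.mem_Icc.mp hq1m
      obtain ⟨hq21, _⟩ := Finset.mem_Icc.mp hq2m
      have hpa : 0 < q.1 ^ q.2 := pow_pos (by omega) _
      have ht0 : (0:ℝ) < ((q.1 ^ q.2 : ℕ) : ℝ) := by exact_mod_cast hpa
      have ht1 : (1:ℝ) ≤ ((q.1 ^ q.2 : ℕ) : ℝ) := by exact_mod_cast hpa
      have htM : ((q.1 ^ q.2 : ℕ) : ℝ) ≤ (M:ℝ) := by exact_mod_cast hqle
      have hf : f (q.1 ^ q.2) ≤ B * ((q.1 ^ q.2 : ℕ) : ℝ) ^ ((1:ℝ)/8) := hfA2 _ hpa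
      have hlog : Real.log ((q.1 ^ q.2 : ℕ) : ℝ) ≤ 8 * ((q.1 ^ q.2 : ℕ) : ℝ) ^ ((1:ℝ)/8) := by
        have := shiu_log_le ht1 (by norm_num : (0:ℝ) < 1/8)
        linarith
      calc f (q.1 ^ q.2) * Real.log ((q.1 ^ q.2 : ℕ) : ℝ)
          ≤ (B * ((q.1 ^ q.2 : ℕ) : ℝ) ^ ((1:ℝ)/8)) * (8 * ((q.1 ^ q.2 : ℕ) : ℝ) ^ ((1:ℝ)/8)) := by
            apply mul_le_mul hf hlog (Real.log_nonneg ht1) (by positivity)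
        _ = 8 * B * (((q.1 ^ q.2 : ℕ) : ℝ) ^ ((1:ℝ)/8) * ((q.1 ^ q.2 : ℕ) : ℝ) ^ ((1:ℝ)/8)) := by
            ring
        _ = 8 * B * ((q.1 ^ q.2 : ℕ) : ℝ) ^ ((1:ℝ)/4) := by
            rw [← Real.rpow_add ht0]; norm_num
        _ ≤ 8 * B * (M:ℝ) ^ ((1:ℝ)/4) := by
            have := Real.rpow_le_rpow ht0.le htM (by norm_num : (0:ℝ) ≤ 1/4)
            exact mul_le_mul_of_nonneg_left this (by positivity)
    have hsub : s.filter (fun q : ℕ × ℕ => ¬ q.2 = 1) ⊆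
        Finset.Icc 2 (Nat.sqrt M) ×ˢ Finset.Icc 2 (Nat.log 2 M) := by
      intro q hq
      obtain ⟨hqs, hq2ne⟩ := Finset.mem_filter.mp hq
      rw [hs] at hqs
      obtain ⟨hqm, hqp, hqle⟩ := Finset.mem_filter.mp hqs
      obtain ⟨hq1m, hq2m⟩ := Finset.mem_product.mp hqm
      obtain ⟨hq1two, _⟩ := Finset.mem_Icc.mp hq1m
      obtain ⟨hq21, _⟩ := Finset.mem_Icc.mp hq2m
      have hq2two : 2 ≤ q.2 := by omega
      refine Finset.mem_product.mpr ⟨Finset.mem_Icc.mpr ⟨hq1two, ?_⟩,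
        Finset.mem_Icc.mpr ⟨hq2two, ?_⟩⟩
      · rw [Nat.le_sqrt]
        calc q.1 * q.1 = q.1 ^ 2 := (sq q.1).symm
          _ ≤ q.1 ^ q.2 := Nat.pow_le_pow_right (by omega) hq2two
          _ ≤ M := hqle
      · rw [Nat.le_log_iff_pow_le (by norm_num) hM.ne']
        calc 2 ^ q.2 ≤ q.1 ^ q.2 := Nat.pow_le_pow_left hq1two _
          _ ≤ M := hqle
    have hcard : (((s.filter (fun q : ℕ × ℕ => ¬ q.2 = 1)).card : ℕ) : ℝ)
        ≤ (M:ℝ) ^ ((1:ℝ)/2) * (12 * (M:ℝ) ^ ((1:ℝ)/8)) := by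
      have hc1 : (s.filter (fun q : ℕ × ℕ => ¬ q.2 = 1)).card ≤ Nat.sqrt M * Nat.log 2 M := by
        calc (s.filter (fun q : ℕ × ℕ => ¬ q.2 = 1)).card
            ≤ (Finset.Icc 2 (Nat.sqrt M) ×ˢ Finset.Icc 2 (Nat.log 2 M)).card :=
              Finset.card_le_card hsub
          _ = (Finset.Icc 2 (Nat.sqrt M)).card * (Finset.Icc 2 (Nat.log 2 M)).card :=
              Finset.card_product _ _
          _ ≤ Nat.sqrt M * Nat.log 2 M := by
              apply Nat.mul_le_mul <;> · rw [Nat.card_Icc]; omega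
      have hsqrt : ((Nat.sqrt M : ℕ) : ℝ) ≤ (M:ℝ) ^ ((1:ℝ)/2) := by
        rw [← Real.sqrt_eq_rpow]
        rw [Real.le_sqrt (by positivity) (by positivity)]
        exact_mod_cast Nat.sqrt_le' M
      have hlog2M : ((Nat.log 2 M : ℕ) : ℝ) ≤ 12 * (M:ℝ) ^ ((1:ℝ)/8) := by
        have hp2 : (2:ℕ) ^ Nat.log 2 M ≤ M := Nat.pow_log_le_self 2 hM.ne'
        have hp2r : ((2:ℝ)) ^ (Nat.log 2 M) ≤ (M:ℝ) := by exact_mod_cast hp2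
        have hlogle : ((Nat.log 2 M : ℕ) : ℝ) * Real.log 2 ≤ Real.log (M:ℝ) := by
          have := Real.log_le_log (by positivity) hp2r
          rwa [Real.log_pow] at this
        have hlogM : Real.log (M:ℝ) ≤ 8 * (M:ℝ) ^ ((1:ℝ)/8) := by
          have := shiu_log_le hM1 (by norm_num : (0:ℝ) < 1/8)
          linarith
        have hlog2 : (0:ℝ) < Real.log 2 := Real.log_pos (by norm_num)
        have hu0 : (0:ℝ) ≤ (M:ℝ) ^ ((1:ℝ)/8) := by positivity
        have hkey : ((Nat.log 2 M : ℕ) : ℝ) * Real.log 2 ≤ (12 * (M:ℝ) ^ ((1:ℝ)/8)) * Real.log 2 := by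
          nlinarith [Real.log_two_gt_d9, mul_nonneg hu0 hlog2.le]
        exact le_of_mul_le_mul_right hkey hlog2
      calc (((s.filter (fun q : ℕ × ℕ => ¬ q.2 = 1)).card : ℕ) : ℝ)
          ≤ ((Nat.sqrt M * Nat.log 2 M : ℕ) : ℝ) := by exact_mod_cast hc1
        _ = ((Nat.sqrt M : ℕ) : ℝ) * ((Nat.log 2 M : ℕ) : ℝ) := by push_cast; ring
        _ ≤ (M:ℝ) ^ ((1:ℝ)/2) * (12 * (M:ℝ) ^ ((1:ℝ)/8)) := by
            apply mul_le_mul hsqrt hlog2M (Nat.cast_nonneg _) (by positivity)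
    calc ∑ q ∈ s.filter (fun q : ℕ × ℕ => ¬ q.2 = 1),
          f (q.1 ^ q.2) * Real.log ((q.1 ^ q.2 : ℕ) : ℝ)
        ≤ (s.filter (fun q : ℕ × ℕ => ¬ q.2 = 1)).card • (8 * B * (M:ℝ) ^ ((1:ℝ)/4)) :=
          Finset.sum_le_card_nsmul _ _ _ hb
      _ = (((s.filter (fun q : ℕ × ℕ => ¬ q.2 = 1)).card : ℕ) : ℝ) * (8 * B * (M:ℝ) ^ ((1:ℝ)/4)) := by
          rw [nsmul_eq_mul]
      _ ≤ ((M:ℝ) ^ ((1:ℝ)/2) * (12 * (M:ℝ) ^ ((1:ℝ)/8))) * (8 * B * (M:ℝ) ^ ((1:ℝ)/4)) := by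
          apply mul_le_mul_of_nonneg_right hcard (by positivity)
      _ = 96 * B * ((M:ℝ) ^ ((1:ℝ)/2) * (M:ℝ) ^ ((1:ℝ)/8) * (M:ℝ) ^ ((1:ℝ)/4)) := by ring
      _ = 96 * B * (M:ℝ) ^ ((7:ℝ)/8) := by
          rw [← Real.rpow_add hM0, ← Real.rpow_add hM0]; norm_num
      _ ≤ 96 * B * (M:ℝ) := by
          have h78 : (M:ℝ) ^ ((7:ℝ)/8) ≤ (M:ℝ) ^ (1:ℝ) :=
            Real.rpow_le_rpow_of_exponent_le hM1 (by norm_num)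
          rw [Real.rpow_one] at h78
          exact mul_le_mul_of_nonneg_left h78 (by positivity)
  calc ∑ q ∈ s.filter (fun q : ℕ × ℕ => q.2 = 1),
        f (q.1 ^ q.2) * Real.log ((q.1 ^ q.2 : ℕ) : ℝ)
      + ∑ q ∈ s.filter (fun q : ℕ × ℕ => ¬ q.2 = 1),
        f (q.1 ^ q.2) * Real.log ((q.1 ^ q.2 : ℕ) : ℝ)
      ≤ A₁ * ((M:ℝ) * Real.log 4) + 96 * B * (M:ℝ) := add_le_add h1 h2
    _ = (A₁ * Real.log 4 + 96 * B) * (M:ℝ) := by ring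

private def shiuIdx (σ : (_ : ℕ) × ℕ) : (_ : ℕ) × (ℕ × ℕ) :=
  ⟨σ.1 / σ.2 ^ σ.1.factorization σ.2, (σ.2, σ.1.factorization σ.2)⟩

private noncomputable def shiuTerm (f : ℕ → ℝ) (τ : (_ : ℕ) × (ℕ × ℕ)) : ℝ :=
  f τ.1 * (f (τ.2.1 ^ τ.2.2) * Real.log ((τ.2.1 ^ τ.2.2 : ℕ) : ℝ))

set_option maxHeartbeats 1000000 in
private lemma shiu_swap (f : ℕ → ℝ) (N : ℕ)
    (hf0 : ∀ n : ℕ, 0 < n → 0 ≤ f n)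
    (hfmul : ∀ m n : ℕ, 0 < m → 0 < n → m.Coprime n → f (m * n) = f m * f n) :
    ∑ n ∈ Finset.Icc 1 N, f n * Real.log (n:ℝ) ≤
      ∑ m ∈ Finset.Icc 1 N, f m *
        (∑ q ∈ ((Finset.Icc 2 (N/m) ×ˢ Finset.Icc 1 (N/m)).filter
            fun q : ℕ × ℕ => q.1.Prime ∧ q.1 ^ q.2 ≤ N/m),
          f (q.1 ^ q.2) * Real.log ((q.1 ^ q.2 : ℕ) : ℝ)) := by
  classical
  have key : ∀ n ∈ Finset.Icc 1 N, f n * Real.log (n:ℝ)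
      = ∑ p ∈ n.primeFactors, f (n / p ^ n.factorization p) *
          (f (p ^ n.factorization p) * Real.log ((p ^ n.factorization p : ℕ) : ℝ)) := by
    intro n hn
    obtain ⟨hn1, hnN⟩ := Finset.mem_Icc.mp hn
    have hn0 : n ≠ 0 := by omega
    have hlog : Real.log (n:ℝ)
        = ∑ p ∈ n.primeFactors, Real.log ((p ^ n.factorization p : ℕ) : ℝ) := by
      have hprod : (n:ℝ) = ∏ p ∈ n.primeFactors, ((p ^ n.factorization p : ℕ) : ℝ) := by
        rw [← Nat.cast_prod]
        congr 1
        conv_lhs => rw [← Nat.factorization_prod_pow_eq_self hn0]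
        rfl
      rw [hprod, Real.log_prod]
      intro p hp
      have hpp := Nat.prime_of_mem_primeFactors hp
      have : 0 < p ^ n.factorization p := pow_pos hpp.pos _
      exact_mod_cast this.ne'
    rw [hlog, Finset.mul_sum]
    refine Finset.sum_congr rfl fun p hp => ?_
    have hpp := Nat.prime_of_mem_primeFactors hp
    have hfsplit : f n = f (p ^ n.factorization p) * f (n / p ^ n.factorization p) := by
      conv_lhs => rw [← Nat.ordProj_mul_ordCompl_eq_self n p]
      exact hfmul _ _ (pow_pos hpp.pos _) (Nat.ordCompl_pos p hn0)
        ((Nat.coprime_ordCompl hpp hn0).pow_left _)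
    rw [hfsplit]; ring
  have hL : ∑ n ∈ Finset.Icc 1 N, f n * Real.log (n:ℝ)
      = ∑ σ ∈ (Finset.Icc 1 N).sigma (fun n => n.primeFactors), shiuTerm f (shiuIdx σ) := by
    rw [Finset.sum_sigma]
    refine Finset.sum_congr rfl fun n hn => ?_
    rw [key n hn]
    exact Finset.sum_congr rfl fun p _ => by simp only [shiuTerm, shiuIdx]
  have hR : ∑ m ∈ Finset.Icc 1 N, f m *
        (∑ q ∈ ((Finset.Icc 2 (N/m) ×ˢ Finset.Icc 1 (N/m)).filter
            fun q : ℕ × ℕ => q.1.Prime ∧ q.1 ^ q.2 ≤ N/m),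
          f (q.1 ^ q.2) * Real.log ((q.1 ^ q.2 : ℕ) : ℝ))
      = ∑ τ ∈ (Finset.Icc 1 N).sigma (fun m =>
          ((Finset.Icc 2 (N/m) ×ˢ Finset.Icc 1 (N/m)).filter
            fun q : ℕ × ℕ => q.1.Prime ∧ q.1 ^ q.2 ≤ N/m)), shiuTerm f τ := by
    rw [Finset.sum_sigma]
    refine Finset.sum_congr rfl fun m _ => ?_
    rw [Finset.mul_sum]
    exact Finset.sum_congr rfl fun q _ => by simp only [shiuTerm]
  rw [hL, hR]
  have hinj : ∀ σ ∈ (Finset.Icc 1 N).sigma (fun n => n.primeFactors),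
      ∀ σ' ∈ (Finset.Icc 1 N).sigma (fun n => n.primeFactors),
      shiuIdx σ = shiuIdx σ' → σ = σ' := by
    rintro ⟨n, p⟩ hσ ⟨n', p'⟩ hσ' heq
    have hm : n / p ^ n.factorization p = n' / p' ^ n'.factorization p' :=
      congrArg (fun s : (_ : ℕ) × (ℕ × ℕ) => s.fst) heq
    have h2 : ((p, n.factorization p) : ℕ × ℕ) = (p', n'.factorization p') :=
      congrArg (fun s : (_ : ℕ) × (ℕ × ℕ) => s.snd) heq
    obtain ⟨hpp', ha⟩ := Prod.ext_iff.mp h2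
    dsimp only at hpp' ha hm
    subst hpp'
    have e1 := Nat.ordProj_mul_ordCompl_eq_self n p
    have e2 := Nat.ordProj_mul_ordCompl_eq_self n' p
    have hnn' : n = n' := by
      rw [ha] at hm
      conv_lhs => rw [← e1]
      conv_rhs => rw [← e2]
      rw [ha, hm]
    subst hnn'; rfl
  calc ∑ σ ∈ (Finset.Icc 1 N).sigma (fun n => n.primeFactors), shiuTerm f (shiuIdx σ)
      = ∑ τ ∈ ((Finset.Icc 1 N).sigma (fun n => n.primeFactors)).image shiuIdx,
          shiuTerm f τ := (Finset.sum_image hinj).symm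
    _ ≤ ∑ τ ∈ (Finset.Icc 1 N).sigma (fun m =>
          ((Finset.Icc 2 (N/m) ×ˢ Finset.Icc 1 (N/m)).filter
            fun q : ℕ × ℕ => q.1.Prime ∧ q.1 ^ q.2 ≤ N/m)), shiuTerm f τ := by
        apply Finset.sum_le_sum_of_subset_of_nonneg
        · intro τ hτ
          obtain ⟨⟨n, p⟩, hσ, rfl⟩ := Finset.mem_image.mp hτ
          simp only [Finset.mem_sigma, Finset.mem_Icc] at hσ
          obtain ⟨⟨hn1, hnN⟩, hp⟩ := hσ
          have hn0 : n ≠ 0 := by omega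
          have hpp : p.Prime := Nat.prime_of_mem_primeFactors hp
          have hdvd : p ∣ n := Nat.dvd_of_mem_primeFactors hp
          have hm0 : 0 < n / p ^ n.factorization p := Nat.ordCompl_pos p hn0
          have hmn : p ^ n.factorization p * (n / p ^ n.factorization p) = n :=
            Nat.ordProj_mul_ordCompl_eq_self n p
          have ha1 : 1 ≤ n.factorization p := Nat.Prime.factorization_pos_of_dvd hpp hn0 hdvd
          have hpam : p ^ n.factorization p ≤ N / (n / p ^ n.factorization p) := by
            rw [Nat.le_div_iff_mul_le hm0, hmn]
            exact hnN
          have hpN : p ≤ N / (n / p ^ n.factorization p) :=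
            le_trans (Nat.le_self_pow (by omega) p) hpam
          have haN : n.factorization p ≤ N / (n / p ^ n.factorization p) :=
            le_trans (le_of_lt Nat.lt_two_pow_self)
              (le_trans (Nat.pow_le_pow_left hpp.two_le _) hpam)
          simp only [shiuIdx, Finset.mem_sigma, Finset.mem_filter, Finset.mem_product,
            Finset.mem_Icc]
          exact ⟨⟨hm0, le_trans (Nat.div_le_self n _) hnN⟩,
            ⟨⟨hpp.two_le, hpN⟩, ⟨ha1, haN⟩⟩, hpp, hpam⟩
        · rintro ⟨m, p, a⟩ hτ _
          simp only [Finset.mem_sigma, Finset.mem_filter, Finset.mem_product,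
            Finset.mem_Icc] at hτ
          obtain ⟨⟨hm1, _⟩, ⟨⟨hq1two, _⟩, _⟩, _, _⟩ := hτ
          have hpa : 0 < p ^ a := pow_pos (by omega) _
          simp only [shiuTerm]
          exact mul_nonneg (hf0 m (by omega))
            (mul_nonneg (hf0 _ hpa) (Real.log_nonneg (by exact_mod_cast hpa)))

set_option maxHeartbeats 2000000 in
/-- Brun–Titchmarsh-type theorem for multiplicative functions, part (a).
Let `f` be a non-negative multiplicative arithmetic function with `f(p^r) ≤ A₁^r` for all
primes `p` and `r ≥ 1`, and `f(n) ≤ A₂(ε) n^ε` for every `ε > 0` and all `n ≥ 1`.  Then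
`∑_{n ≤ x} f(n) ≪ (x / log x) exp(∑_{p ≤ x} f(p)/p)` for `x ≥ 2`, with implied constant
depending only on `A₁` and the function `A₂`. -/
theorem shiu_sum_bound (A₁ : ℝ) (hA₁ : 0 < A₁) (A₂ : ℝ → ℝ)
    (hA₂ : ∀ ε : ℝ, 0 < ε → 0 < A₂ ε) :
    ∃ C : ℝ, 0 < C ∧ ∀ f : ℕ → ℝ,
      (∀ n : ℕ, 0 < n → 0 ≤ f n) →
      f 1 = 1 →
      (∀ m n : ℕ, 0 < m → 0 < n → m.Coprime n → f (m * n) = f m * f n) →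
      (∀ p r : ℕ, p.Prime → 1 ≤ r → f (p ^ r) ≤ A₁ ^ r) →
      (∀ ε : ℝ, 0 < ε → ∀ n : ℕ, 0 < n → f n ≤ A₂ ε * (n : ℝ) ^ ε) →
      ∀ x : ℝ, 2 ≤ x →
        ∑ n ∈ Finset.Icc 1 ⌊x⌋₊, f n ≤
          C * (x / Real.log x) *
            Real.exp (∑ p ∈ (Finset.Icc 1 ⌊x⌋₊).filter Nat.Prime, f p / p) := by
  classical
  have hA8 : 0 < A₂ (1/8) := hA₂ _ (by norm_num)
  have hA4 : 0 < A₂ (1/4) := hA₂ _ (by norm_num)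
  set s₀ : ℝ := (2:ℝ) ^ (-(3:ℝ)/4) with hs₀def
  have hs₀lt : s₀ < 1 := Real.rpow_lt_one_of_one_lt_of_neg (by norm_num) (by norm_num)
  have hs₀pos : 0 < s₀ := Real.rpow_pos_of_pos (by norm_num) _
  set κ : ℝ := (1 - s₀)⁻¹ with hκdef
  have hκpos : 0 < κ := inv_pos.mpr (by linarith)
  set ζ' : ℝ := ∑' n : ℕ, (n:ℝ) ^ (-(3:ℝ)/2) with hζdef
  have hζsum : Summable (fun n : ℕ => (n:ℝ) ^ (-(3:ℝ)/2)) :=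
    Real.summable_nat_rpow.mpr (by norm_num)
  have hζ0 : 0 ≤ ζ' := tsum_nonneg fun n => Real.rpow_nonneg (Nat.cast_nonneg n) _
  set cA : ℝ := A₂ (1/4) * κ * ζ' with hcAdef
  have hcA0 : 0 ≤ cA := by positivity
  have hlog4 : 0 < Real.log 4 := Real.log_pos (by norm_num)
  set cV : ℝ := A₁ * Real.log 4 + 96 * A₂ (1/8) with hcVdef
  have hcV0 : 0 < cV := by positivity
  refine ⟨(cV + 1) * Real.exp cA, by positivity, ?_⟩
  intro f hf0 hf1 hfmul hfA1 hfA2 x hx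
  set N := ⌊x⌋₊ with hNdef
  have hx0 : (0:ℝ) < x := by linarith
  have hN2 : 2 ≤ N := Nat.le_floor (by exact_mod_cast hx)
  have hNx : (N:ℝ) ≤ x := Nat.floor_le hx0.le
  have hLx : 0 < Real.log x := Real.log_pos (by linarith)
  -- the auxiliary multiplicative function h n = f n / n
  set h : ℕ → ℝ := fun n => if n = 0 then 0 else f n / n with hdef
  have hh0 : ∀ n, 0 ≤ h n := by
    intro n
    by_cases hn : n = 0
    · simp [hdef, hn]
    · simp only [hdef, if_neg hn]
      exact div_nonneg (hf0 n (Nat.pos_of_ne_zero hn)) (Nat.cast_nonneg n)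
  have hh1 : h 1 = 1 := by simp [hdef, hf1]
  have hhval : ∀ n : ℕ, n ≠ 0 → h n = f n / n := by
    intro n hn; simp only [hdef, if_neg hn]
  have hhmul : ∀ {m n : ℕ}, Nat.Coprime m n → h (m * n) = h m * h n := by
    intro m n hco
    rcases Nat.eq_zero_or_pos m with rfl | hm
    · have hn1 : n = 1 := Nat.coprime_zero_left n |>.mp hco
      subst hn1; simp [hdef, hf1]
    rcases Nat.eq_zero_or_pos n with rfl | hn
    · have hm1 : m = 1 := Nat.coprime_zero_right m |>.mp hco
      subst hm1; simp [hdef, hf1]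
    · have hmn : m * n ≠ 0 := Nat.mul_ne_zero hm.ne' hn.ne'
      simp only [hdef, if_neg hmn, if_neg hm.ne', if_neg hn.ne']
      rw [hfmul m n hm hn hco]
      push_cast
      ring
  have hpow_le : ∀ p : ℕ, p.Prime → ∀ a : ℕ,
      h (p ^ a) ≤ A₂ (1/4) * ((p:ℝ) ^ (-(3:ℝ)/4)) ^ a := by
    intro p hp a
    have hp1 : (1:ℝ) < (p:ℝ) := by exact_mod_cast hp.one_lt
    have hp0 : (0:ℝ) < (p:ℝ) := by linarith
    have hpa : 0 < p ^ a := pow_pos hp.pos a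
    have ht0 : (0:ℝ) < ((p ^ a : ℕ):ℝ) := by exact_mod_cast hpa
    rw [hhval _ hpa.ne']
    have hfle : f (p ^ a) ≤ A₂ (1/4) * ((p ^ a : ℕ):ℝ) ^ ((1:ℝ)/4) :=
      hfA2 (1/4) (by norm_num) _ hpa
    have hstep : f (p ^ a) / ((p ^ a : ℕ):ℝ)
        ≤ (A₂ (1/4) * ((p ^ a : ℕ):ℝ) ^ ((1:ℝ)/4)) / ((p ^ a : ℕ):ℝ) := by
      gcongr
    refine hstep.trans_eq ?_
    rw [Nat.cast_pow, mul_div_assoc]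
    congr 1
    rw [← Real.rpow_natCast (p:ℝ) a, ← Real.rpow_mul hp0.le, ← Real.rpow_sub hp0,
      ← Real.rpow_natCast ((p:ℝ) ^ (-(3:ℝ)/4)) a, ← Real.rpow_mul hp0.le]
    congr 1
    ring
  have hsump : ∀ {p : ℕ}, p.Prime → Summable (fun a : ℕ => ‖h (p ^ a)‖) := by
    intro p hp
    have hp1 : (1:ℝ) < (p:ℝ) := by exact_mod_cast hp.one_lt
    have hr0 : 0 ≤ (p:ℝ) ^ (-(3:ℝ)/4) := Real.rpow_nonneg (by positivity) _
    have hr1 : (p:ℝ) ^ (-(3:ℝ)/4) < 1 := Real.rpow_lt_one_of_one_lt_of_neg hp1 (by norm_num)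
    refine Summable.of_nonneg_of_le (fun a => norm_nonneg _) (fun a => ?_)
      ((summable_geometric_of_lt_one hr0 hr1).mul_left (A₂ (1/4)))
    rw [Real.norm_of_nonneg (hh0 _)]
    exact hpow_le p hp a
  obtain ⟨hsmooth_sum, hprod⟩ :=
    EulerProduct.summable_and_hasSum_smoothNumbers_prod_primesBelow_tsum hh1 hhmul hsump (N+1)
  have hhind : HasSum (Set.indicator ((N+1).smoothNumbers) h)
      (∏ p ∈ (N+1).primesBelow, ∑' a : ℕ, h (p ^ a)) :=
    hasSum_subtype_iff_indicator.mp hprod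
  have hTle : ∑ n ∈ Finset.Icc 1 N, f n / n ≤ ∏ p ∈ (N+1).primesBelow, ∑' a : ℕ, h (p ^ a) := by
    have heq : ∑ n ∈ Finset.Icc 1 N, f n / (n:ℝ)
        = ∑ n ∈ Finset.Icc 1 N, Set.indicator ((N+1).smoothNumbers) h n := by
      refine Finset.sum_congr rfl fun n hn => ?_
      obtain ⟨hn1, hnN⟩ := Finset.mem_Icc.mp hn
      have hn0 : n ≠ 0 := by omega
      have hmem : n ∈ (N+1).smoothNumbers := by
        rw [Nat.mem_smoothNumbers]
        exact ⟨hn0, fun p hp =>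
          lt_of_le_of_lt (le_trans (Nat.le_of_mem_primeFactorsList hp) hnN) (Nat.lt_succ_self N)⟩
      rw [Set.indicator_of_mem hmem, hhval n hn0]
    rw [heq]
    calc ∑ n ∈ Finset.Icc 1 N, Set.indicator ((N+1).smoothNumbers) h n
        ≤ ∑' n : ℕ, Set.indicator ((N+1).smoothNumbers) h n :=
          Summable.sum_le_tsum _ (fun i _ => Set.indicator_nonneg (fun a _ => hh0 a) i) hhind.summable
      _ = _ := hhind.tsum_eq
  have hfactor : ∀ p ∈ (N+1).primesBelow, (∑' a : ℕ, h (p ^ a))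
      ≤ Real.exp (f p / p + A₂ (1/4) * κ * (p:ℝ) ^ (-(3:ℝ)/2)) := by
    intro p hpmem
    have hp : p.Prime := Nat.prime_of_mem_primesBelow hpmem
    have hp1 : (1:ℝ) < (p:ℝ) := by exact_mod_cast hp.one_lt
    set r : ℝ := (p:ℝ) ^ (-(3:ℝ)/4) with hrdef
    have hr0 : 0 ≤ r := Real.rpow_nonneg (by positivity) _
    have hr1 : r < 1 := Real.rpow_lt_one_of_one_lt_of_neg hp1 (by norm_num)
    have hrs : r ≤ s₀ := by
      rw [hrdef, hs₀def]
      exact Real.rpow_le_rpow_of_nonpos (by norm_num) (by exact_mod_cast hp.two_le) (by norm_num)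
    have hsum_p : Summable fun a : ℕ => h (p ^ a) :=
      Summable.of_nonneg_of_le (fun a => hh0 _) (fun a => hpow_le p hp a)
        ((summable_geometric_of_lt_one hr0 hr1).mul_left _)
    have htail_sum : Summable fun a : ℕ => h (p ^ (a + 2)) := (summable_nat_add_iff 2).mpr hsum_p
    have hgeo_shift : Summable fun a : ℕ => A₂ (1/4) * r ^ (a + 2) := by
      have hbase : Summable fun a : ℕ => (A₂ (1/4) * r ^ 2) * r ^ a :=
        (summable_geometric_of_lt_one hr0 hr1).mul_left _
      exact hbase.congr fun a => by rw [pow_add]; ring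
    have htail : (∑' a : ℕ, h (p ^ (a + 2))) ≤ A₂ (1/4) * κ * (p:ℝ) ^ (-(3:ℝ)/2) := by
      have h1 : (∑' a : ℕ, h (p ^ (a + 2))) ≤ ∑' a : ℕ, A₂ (1/4) * r ^ (a + 2) :=
        Summable.tsum_le_tsum (fun a => hpow_le p hp (a + 2)) htail_sum hgeo_shift
      have h2 : (∑' a : ℕ, A₂ (1/4) * r ^ (a + 2)) = A₂ (1/4) * r ^ 2 * (1 - r)⁻¹ := by
        calc ∑' a : ℕ, A₂ (1/4) * r ^ (a + 2)
            = ∑' a : ℕ, (A₂ (1/4) * r ^ 2) * r ^ a :=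
              tsum_congr fun a => by rw [pow_add]; ring
          _ = (A₂ (1/4) * r ^ 2) * ∑' a : ℕ, r ^ a := tsum_mul_left
          _ = _ := by rw [tsum_geometric_of_lt_one hr0 hr1]
      have h3 : r ^ 2 = (p:ℝ) ^ (-(3:ℝ)/2) := by
        rw [hrdef, ← Real.rpow_natCast ((p:ℝ) ^ (-(3:ℝ)/4)) 2,
          ← Real.rpow_mul (by positivity : (0:ℝ) ≤ (p:ℝ))]
        norm_num
      have h4 : (1 - r)⁻¹ ≤ κ := by
        rw [hκdef]
        exact inv_anti₀ (by linarith) (by linarith)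
      calc (∑' a : ℕ, h (p ^ (a + 2))) ≤ A₂ (1/4) * r ^ 2 * (1 - r)⁻¹ := h1.trans_eq h2
        _ ≤ A₂ (1/4) * r ^ 2 * κ := by
            apply mul_le_mul_of_nonneg_left h4 (by positivity)
        _ = A₂ (1/4) * κ * (p:ℝ) ^ (-(3:ℝ)/2) := by rw [h3]; ring
    have hsplit := Summable.sum_add_tsum_nat_add 2 hsum_p
    have hrange : ∑ a ∈ Finset.range 2, h (p ^ a) = 1 + f p / p := by
      rw [Finset.sum_range_succ, Finset.sum_range_one, pow_zero, pow_one, hh1, hhval p hp.pos.ne']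
    have hfpp : 0 ≤ f p / p := div_nonneg (hf0 p hp.pos) (by positivity)
    have htail0 : 0 ≤ ∑' a : ℕ, h (p ^ (a + 2)) := tsum_nonneg fun a => hh0 _
    calc (∑' a : ℕ, h (p ^ a)) = 1 + f p / p + ∑' a : ℕ, h (p ^ (a + 2)) := by
          rw [← hsplit, hrange]
      _ ≤ 1 + (f p / p + A₂ (1/4) * κ * (p:ℝ) ^ (-(3:ℝ)/2)) := by linarith
      _ ≤ Real.exp (f p / p + A₂ (1/4) * κ * (p:ℝ) ^ (-(3:ℝ)/2)) := by
          have := Real.add_one_le_exp (f p / p + A₂ (1/4) * κ * (p:ℝ) ^ (-(3:ℝ)/2))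
          linarith
  have hprodle : (∏ p ∈ (N+1).primesBelow, ∑' a : ℕ, h (p ^ a)) ≤
      Real.exp cA * Real.exp (∑ p ∈ (N+1).primesBelow, f p / p) := by
    have h1 : (∏ p ∈ (N+1).primesBelow, ∑' a : ℕ, h (p ^ a)) ≤
        ∏ p ∈ (N+1).primesBelow, Real.exp (f p / p + A₂ (1/4) * κ * (p:ℝ) ^ (-(3:ℝ)/2)) :=
      Finset.prod_le_prod (fun p _ => tsum_nonneg fun a => hh0 _) hfactor
    have h2 : ∏ p ∈ (N+1).primesBelow, Real.exp (f p / p + A₂ (1/4) * κ * (p:ℝ) ^ (-(3:ℝ)/2))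
        = Real.exp (∑ p ∈ (N+1).primesBelow, (f p / p + A₂ (1/4) * κ * (p:ℝ) ^ (-(3:ℝ)/2))) :=
      (Real.exp_sum _ _).symm
    have h3 : ∑ p ∈ (N+1).primesBelow, (f p / p + A₂ (1/4) * κ * (p:ℝ) ^ (-(3:ℝ)/2))
        ≤ (∑ p ∈ (N+1).primesBelow, f p / p) + cA := by
      rw [Finset.sum_add_distrib]
      have hextra : ∑ p ∈ (N+1).primesBelow, A₂ (1/4) * κ * (p:ℝ) ^ (-(3:ℝ)/2)
          ≤ A₂ (1/4) * κ * ζ' := by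
        rw [← Finset.mul_sum]
        have hsle : ∑ p ∈ (N+1).primesBelow, (p:ℝ) ^ (-(3:ℝ)/2) ≤ ζ' :=
          Summable.sum_le_tsum _ (fun i _ => Real.rpow_nonneg (Nat.cast_nonneg i) _) hζsum
        exact mul_le_mul_of_nonneg_left hsle (by positivity)
      linarith [hextra, hcAdef]
    calc (∏ p ∈ (N+1).primesBelow, ∑' a : ℕ, h (p ^ a))
        ≤ ∏ p ∈ (N+1).primesBelow, Real.exp (f p / p + A₂ (1/4) * κ * (p:ℝ) ^ (-(3:ℝ)/2)) := h1
      _ = Real.exp (∑ p ∈ (N+1).primesBelow, (f p / p + A₂ (1/4) * κ * (p:ℝ) ^ (-(3:ℝ)/2))) := h2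
      _ ≤ Real.exp ((∑ p ∈ (N+1).primesBelow, f p / p) + cA) := Real.exp_le_exp.mpr h3
      _ = Real.exp cA * Real.exp (∑ p ∈ (N+1).primesBelow, f p / p) := by
          rw [Real.exp_add, mul_comm]
  have hT : ∑ n ∈ Finset.Icc 1 N, f n / n ≤
      Real.exp cA * Real.exp (∑ p ∈ (N+1).primesBelow, f p / p) := hTle.trans hprodle
  have hPset : (Finset.Icc 1 N).filter Nat.Prime = (N+1).primesBelow := by
    ext p
    simp only [Finset.mem_filter, Finset.mem_Icc, Nat.primesBelow, Finset.mem_range,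
      Nat.lt_succ_iff]
    constructor
    · rintro ⟨⟨_, h2⟩, hp⟩; exact ⟨h2, hp⟩
    · rintro ⟨h2, hp⟩; exact ⟨⟨hp.one_lt.le, h2⟩, hp⟩
  -- Step B
  have hswap := shiu_swap f N hf0 hfmul
  have hVle : ∀ M : ℕ,
      (∑ q ∈ ((Finset.Icc 2 M ×ˢ Finset.Icc 1 M).filter
          fun q : ℕ × ℕ => q.1.Prime ∧ q.1 ^ q.2 ≤ M),
        f (q.1 ^ q.2) * Real.log ((q.1 ^ q.2 : ℕ) : ℝ)) ≤ cV * M := by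
    intro M
    have := shiuV_le A₁ hA₁ (A₂ (1/8)) hA8 f hf0 hfA1
      (fun n hn => hfA2 (1/8) (by norm_num) n hn) M
    rw [hcVdef]
    exact this
  have hlogsum : ∑ n ∈ Finset.Icc 1 N, f n * Real.log (n:ℝ)
      ≤ cV * x * ∑ n ∈ Finset.Icc 1 N, f n / n := by
    refine hswap.trans ?_
    have hle : ∀ m ∈ Finset.Icc 1 N, f m *
        (∑ q ∈ ((Finset.Icc 2 (N/m) ×ˢ Finset.Icc 1 (N/m)).filter
            fun q : ℕ × ℕ => q.1.Prime ∧ q.1 ^ q.2 ≤ N/m),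
          f (q.1 ^ q.2) * Real.log ((q.1 ^ q.2 : ℕ) : ℝ)) ≤ cV * x * (f m / m) := by
      intro m hm
      obtain ⟨hm1, hmN⟩ := Finset.mem_Icc.mp hm
      have hm0 : (0:ℝ) < (m:ℝ) := by exact_mod_cast hm1
      have h1 := hVle (N/m)
      have h2 : ((N / m : ℕ):ℝ) ≤ x / m := by
        refine le_trans Nat.cast_div_le ?_
        gcongr
      have h3 : (∑ q ∈ ((Finset.Icc 2 (N/m) ×ˢ Finset.Icc 1 (N/m)).filter
            fun q : ℕ × ℕ => q.1.Prime ∧ q.1 ^ q.2 ≤ N/m),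
          f (q.1 ^ q.2) * Real.log ((q.1 ^ q.2 : ℕ) : ℝ)) ≤ cV * (x / m) :=
        h1.trans (mul_le_mul_of_nonneg_left h2 hcV0.le)
      calc f m * (∑ q ∈ ((Finset.Icc 2 (N/m) ×ˢ Finset.Icc 1 (N/m)).filter
            fun q : ℕ × ℕ => q.1.Prime ∧ q.1 ^ q.2 ≤ N/m),
          f (q.1 ^ q.2) * Real.log ((q.1 ^ q.2 : ℕ) : ℝ))
          ≤ f m * (cV * (x / m)) := mul_le_mul_of_nonneg_left h3 (hf0 m (by omega))
        _ = cV * x * (f m / m) := by ring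
    calc ∑ m ∈ Finset.Icc 1 N, f m *
        (∑ q ∈ ((Finset.Icc 2 (N/m) ×ˢ Finset.Icc 1 (N/m)).filter
            fun q : ℕ × ℕ => q.1.Prime ∧ q.1 ^ q.2 ≤ N/m),
          f (q.1 ^ q.2) * Real.log ((q.1 ^ q.2 : ℕ) : ℝ))
        ≤ ∑ m ∈ Finset.Icc 1 N, cV * x * (f m / m) := Finset.sum_le_sum hle
      _ = cV * x * ∑ n ∈ Finset.Icc 1 N, f n / n := by rw [← Finset.mul_sum]
  have hlogx2 : ∑ n ∈ Finset.Icc 1 N, f n * Real.log (x / n)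
      ≤ x * ∑ n ∈ Finset.Icc 1 N, f n / n := by
    calc ∑ n ∈ Finset.Icc 1 N, f n * Real.log (x / n)
        ≤ ∑ n ∈ Finset.Icc 1 N, f n * (x / n) := by
          refine Finset.sum_le_sum fun n hn => ?_
          obtain ⟨hn1, _⟩ := Finset.mem_Icc.mp hn
          have hn0 : (0:ℝ) < (n:ℝ) := by exact_mod_cast hn1
          exact mul_le_mul_of_nonneg_left (Real.log_le_self (by positivity)) (hf0 n (by omega))
      _ = x * ∑ n ∈ Finset.Icc 1 N, f n / n := by
          rw [Finset.mul_sum]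
          exact Finset.sum_congr rfl fun n _ => by ring
  have hmain : (∑ n ∈ Finset.Icc 1 N, f n) * Real.log x
      ≤ (cV + 1) * (x * ∑ n ∈ Finset.Icc 1 N, f n / n) := by
    have hsplit2 : (∑ n ∈ Finset.Icc 1 N, f n) * Real.log x
        = ∑ n ∈ Finset.Icc 1 N, f n * Real.log (n:ℝ)
          + ∑ n ∈ Finset.Icc 1 N, f n * Real.log (x / n) := by
      rw [Finset.sum_mul, ← Finset.sum_add_distrib]
      refine Finset.sum_congr rfl fun n hn => ?_
      obtain ⟨hn1, _⟩ := Finset.mem_Icc.mp hn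
      have hn0 : (n:ℝ) ≠ 0 := Nat.cast_ne_zero.mpr (by omega)
      rw [Real.log_div (ne_of_gt hx0) hn0]
      ring
    rw [hsplit2]
    linarith [hlogsum, hlogx2]
  rw [hPset]
  have hfinal : (∑ n ∈ Finset.Icc 1 N, f n) * Real.log x
      ≤ (cV + 1) * (x * (Real.exp cA * Real.exp (∑ p ∈ (N+1).primesBelow, f p / p))) := by
    refine hmain.trans ?_
    have hstep : x * (∑ n ∈ Finset.Icc 1 N, f n / n)
        ≤ x * (Real.exp cA * Real.exp (∑ p ∈ (N+1).primesBelow, f p / p)) :=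
      mul_le_mul_of_nonneg_left hT hx0.le
    exact mul_le_mul_of_nonneg_left hstep (by positivity)
  have hrw : (cV + 1) * Real.exp cA * (x / Real.log x)
      * Real.exp (∑ p ∈ (N+1).primesBelow, f p / p)
      = ((cV + 1) * (x * (Real.exp cA * Real.exp (∑ p ∈ (N+1).primesBelow, f p / p))))
        / Real.log x := by
    rw [div_eq_mul_inv, div_eq_mul_inv]
    ring
  rw [hrw, le_div_iff₀ hLx]
  exact hfinal
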